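/- Let S be a commutative ring and A, B ∈ Mₘ(S) with Aⁿ = Aⁿ⁺¹B. Then A^{nm} = A^{nm+1}·g(A) for some polynomial g with coefficients in Mₘ(S); in particular A is strongly π-regular in Mₘ(S). -/
import Mathlib


/-- If `A^n = A^(n+1) * B` over a commutative ring `S` (matrices of size `m`),
then `A^(n*m) = A^(n*m+1) * g(A)` for some polynomial `g` with matrix
coefficients; in particular `A` is strongly π-regular in `Mₘ(S)`. -/
theorem stmt_12 {S : Type*} [CommRing S] {m : ℕ}
    (A B : Matrix (Fin m) (Fin m) S) (n : ℕ) (hn : 0 < n)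
    (h : A ^ n = A ^ (n + 1) * B) :
    (∃ g : Polynomial (Matrix (Fin m) (Fin m) S),
      A ^ (n * m) = A ^ (n * m + 1) * g.eval A) ∧
    ∃ (k : ℕ) (X Y : Matrix (Fin m) (Fin m) S), 0 < k ∧
      A ^ k = A ^ (k + 1) * X ∧ A ^ k = Y * A ^ (k + 1) := by
  rcases subsingleton_or_nontrivial S with hS | hS
  · exact ⟨⟨0, Subsingleton.elim _ _⟩, n, 0, 0, hn, Subsingleton.elim _ _,
      Subsingleton.elim _ _⟩
  -- Key fact: `A^(n+k) * B^k = A^n` for all `k`.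
  have key : ∀ k, A ^ (n + k) * B ^ k = A ^ n := by
    intro k
    induction k with
    | zero => simp
    | succ k ih =>
      have e : A ^ (n + (k+1)) * B ^ (k+1) = A * (A ^ (n+k) * B ^ k) * B := by
        rw [show n + (k+1) = (n+k)+1 from rfl, pow_succ B, pow_succ']
        rw [mul_assoc, mul_assoc, mul_assoc]
      rw [e, ih, ← pow_succ', ← h]
  -- Cayley–Hamilton applied to `B`.
  have hCH := Matrix.aeval_self_charpoly B
  rw [Polynomial.aeval_eq_sum_range, Matrix.charpoly_natDegree_eq_dim,
    Fintype.card_fin, Finset.sum_range_succ] at hCH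
  have hlead : B.charpoly.coeff m = 1 := by
    have hd : B.charpoly.natDegree = m := by
      rw [Matrix.charpoly_natDegree_eq_dim, Fintype.card_fin]
    have := B.charpoly_monic.coeff_natDegree
    rwa [hd] at this
  rw [hlead, one_smul] at hCH
  -- Multiply the Cayley–Hamilton identity on the left by `A^(n+m)`.
  have h2 := congrArg (fun M => A ^ (n + m) * M) hCH
  simp only [mul_add, mul_zero, Finset.mul_sum, mul_smul_comm, key m] at h2
  have h3 : ∀ i ∈ Finset.range m,
      B.charpoly.coeff i • (A ^ (n + m) * B ^ i)
        = A ^ (n + 1) * (B.charpoly.coeff i • A ^ (m - 1 - i)) := by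
    intro i hi
    rw [Finset.mem_range] at hi
    rw [mul_smul_comm]
    congr 1
    have e1 : n + m = (m - i) + (n + i) := by omega
    rw [e1, pow_add, mul_assoc, key i, ← pow_add, ← pow_add]
    congr 1
    omega
  rw [Finset.sum_congr rfl h3, ← Finset.mul_sum] at h2
  -- The matrix `W` is a polynomial in `A` with scalar coefficients.
  set W : Matrix (Fin m) (Fin m) S :=
    -∑ i ∈ Finset.range m, B.charpoly.coeff i • A ^ (m - 1 - i) with hWdef
  have hW : A ^ n = A ^ (n + 1) * W := by
    rw [hWdef, mul_neg, eq_neg_iff_add_eq_zero, add_comm]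
    exact h2
  have hcomm : Commute W A := by
    rw [hWdef]
    apply Commute.neg_left
    apply Commute.sum_left
    intro i _
    exact ((Commute.refl A).pow_left _).smul_left _
  -- The identity propagates to all higher powers.
  have hgen : ∀ k, A ^ (n + k) = A ^ (n + k + 1) * W := by
    intro k
    have : A ^ (n + k) = A ^ k * A ^ n := by rw [← pow_add]; ring_nf
    rw [this, hW, ← mul_assoc, ← pow_add]
    congr 2
    omega
  constructor
  · rcases Nat.eq_zero_or_pos m with rfl | hm
    · exact ⟨0, by ext i j; exact i.elim0⟩
    · refine ⟨Polynomial.C W, ?_⟩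
      rw [Polynomial.eval_C]
      have hle : n ≤ n * m := Nat.le_mul_of_pos_right n hm
      have e : n * m = n + (n * m - n) := by omega
      rw [e, hgen (n * m - n)]
  · refine ⟨n, W, W, hn, hW, ?_⟩
    rw [hW, (hcomm.pow_right (n + 1)).eq]
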